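/- Let $x_1,\dots,x_B \in [0,1]$ be (possibly random) values chosen by an algorithm where $x_t$ may depend on $Z_1,\dots,Z_{t-1}$, and let $Z_1,\dots,Z_B$ be i.i.d. uniform on $\{-1,1\}$, with $Z_t$ independent of $x_1,\dots,x_t$. If $\mathbb{E}[\sum_{t=1}^B x_t^2] \ge \epsilon B$ for some $\epsilon \in (0, 1/4]$, then $\mathbb{E}[|\sum_{t=1}^B x_t Z_t|] \ge \frac{\epsilon\sqrt{B}}{4\sqrt{\log(1/\epsilon)}}$. -/

import Mathlib

open MeasureTheory ProbabilityTheory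


private lemma cs_aux {Ω : Type*} [MeasurableSpace Ω] (μ : Measure Ω) [IsProbabilityMeasure μ]
    (f g : Ω → ℝ)
    (hf2 : Integrable (fun ω => f ω ^ 2) μ) (hg2 : Integrable (fun ω => g ω ^ 2) μ)
    (hfg : Integrable (fun ω => f ω * g ω) μ) :
    (∫ ω, f ω * g ω ∂μ) ^ 2 ≤ (∫ ω, f ω ^ 2 ∂μ) * (∫ ω, g ω ^ 2 ∂μ) := by
  have h : ∀ c : ℝ, 0 ≤ (∫ ω, g ω ^ 2 ∂μ) * (c * c)
      + (-(2 * ∫ ω, f ω * g ω ∂μ)) * c + (∫ ω, f ω ^ 2 ∂μ) := by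
    intro c
    have h0 : 0 ≤ ∫ ω, (f ω - c * g ω) ^ 2 ∂μ := integral_nonneg fun ω => sq_nonneg _
    have hexp : ∫ ω, (f ω - c * g ω) ^ 2 ∂μ
        = (∫ ω, g ω ^ 2 ∂μ) * (c * c) + (-(2 * ∫ ω, f ω * g ω ∂μ)) * c
          + ∫ ω, f ω ^ 2 ∂μ := by
      have hpt : ∀ ω : Ω, (f ω - c * g ω) ^ 2
          = (c * c) * g ω ^ 2 + (-(2 * c)) * (f ω * g ω) + f ω ^ 2 := fun ω => by ring
      simp only [hpt]
      have hAB : Integrable (fun ω => c * c * g ω ^ 2 + -(2 * c) * (f ω * g ω)) μ :=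
        (hg2.const_mul (c*c)).add (hfg.const_mul (-(2*c)))
      rw [integral_add hAB hf2, integral_add (hg2.const_mul (c*c)) (hfg.const_mul (-(2*c))),
        integral_const_mul, integral_const_mul]
      ring
    linarith [hexp ▸ h0]
  have hd := discrim_le_zero h
  rw [discrim] at hd
  nlinarith [hd]

section Main

variable {Ω : Type*} [MeasurableSpace Ω] (μ : Measure Ω) [IsProbabilityMeasure μ]

set_option maxHeartbeats 2000000 in
theorem stmt0'
    (B : ℕ) (hB : 1 ≤ B) (x Z : Fin B → Ω → ℝ)
    (hx01 : ∀ t ω, x t ω ∈ Set.Icc (0:ℝ) 1)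
    (hxmeas : ∀ t : Fin B, Measurable[⨆ s : Fin B, ⨆ _ : s < t,
      MeasurableSpace.comap (Z s) inferInstance] (x t))
    (hZmeas : ∀ t, Measurable (Z t))
    (hZindep : iIndepFun Z μ)
    (hZ1 : ∀ t, μ {ω | Z t ω = 1} = 1/2)
    (hZneg : ∀ t, μ {ω | Z t ω = -1} = 1/2)
    (ε : ℝ) (hε : ε ∈ Set.Ioc (0:ℝ) (1/4))
    (hmoment : ε * B ≤ ∫ ω, ∑ t, (x t ω)^2 ∂μ) :
    ε * Real.sqrt B / (4 * Real.sqrt (Real.log (1/ε)))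
      ≤ ∫ ω, |∑ t, x t ω * Z t ω| ∂μ := by
  classical
  obtain ⟨hε0, hε4⟩ := hε
  have hBc1 : (1:ℝ) ≤ (B:ℝ) := by exact_mod_cast hB
  have hB0 : (0:ℝ) < (B:ℝ) := by linarith
  set Mlt : Fin B → MeasurableSpace Ω := fun t => ⨆ s : Fin B, ⨆ _ : s < t,
      MeasurableSpace.comap (Z s) inferInstance with hMltdef
  set filt : ℕ → Finset (Fin B) := fun n => Finset.univ.filter (fun s : Fin B => (s:ℕ) < n)
    with hfiltdef
  set W : ℕ → Ω → ℝ := fun n ω => ∑ s ∈ filt n, x s ω * Z s ω with hWdef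
  set S : ℕ → Ω → ℝ := fun n ω => ∑ s ∈ filt n, (x s ω)^2 with hSdef
  have hxmeas' : ∀ t : Fin B, Measurable[Mlt t] (x t) := hxmeas
  have hMle : ∀ t : Fin B, Mlt t ≤ (inferInstance : MeasurableSpace Ω) :=
    fun t => iSup_le fun s => iSup_le fun _ => (hZmeas s).comap_le
  have hxm : ∀ t, Measurable (x t) := fun t => (hxmeas' t).mono (hMle t) le_rfl
  have hMmono : ∀ {s t : Fin B}, s ≤ t → Mlt s ≤ Mlt t := fun {s t} h =>
    iSup_le fun u => iSup_le fun hu =>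
      le_iSup_of_le u (le_iSup_of_le (lt_of_lt_of_le hu h) le_rfl)
  have hZmt : ∀ s t : Fin B, s < t → Measurable[Mlt t] (Z s) := fun s t h =>
    Measurable.of_comap_le (le_iSup_of_le s (le_iSup_of_le h le_rfl))
  -- filt facts
  have hfilt0 : filt 0 = ∅ := by simp [hfiltdef]
  have hfiltB : filt B = Finset.univ := by
    ext s; simp [hfiltdef, s.isLt]
  have hfiltsucc : ∀ t : Fin B, filt ((t:ℕ) + 1) = insert t (filt (t:ℕ)) := by
    intro t; ext s
    simp only [hfiltdef, Finset.mem_filter, Finset.mem_univ, true_and, Finset.mem_insert,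
      Nat.lt_succ_iff, le_iff_lt_or_eq, Fin.ext_iff]
    tauto
  have htnot : ∀ t : Fin B, t ∉ filt (t:ℕ) := by
    intro t; simp [hfiltdef]
  -- measurability of partial sums
  have hWm : ∀ n, Measurable (W n) := fun n =>
    Finset.measurable_sum _ fun s _ => (hxm s).mul (hZmeas s)
  have hWmt : ∀ t : Fin B, Measurable[Mlt t] (W (t:ℕ)) := by
    intro t
    apply Finset.measurable_sum
    intro s hs
    have hst : s < t := by
      have := (Finset.mem_filter.mp hs).2
      exact Fin.lt_def.mpr this
    exact ((hxmeas' s).mono (hMmono hst.le) le_rfl).mul (hZmt s t hst)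
  -- a.e. facts about Z
  have hgood : ∀ᵐ ω ∂μ, ∀ t : Fin B, Z t ω = 1 ∨ Z t ω = -1 := by
    rw [ae_all_iff]
    intro t
    have hA : MeasurableSet {ω | Z t ω = 1} := hZmeas t (measurableSet_singleton 1)
    have hA' : MeasurableSet {ω | Z t ω = -1} := hZmeas t (measurableSet_singleton (-1))
    have hdisj : Disjoint {ω | Z t ω = 1} {ω | Z t ω = -1} := by
      rw [Set.disjoint_left]
      rintro ω h1 h2
      simp only [Set.mem_setOf_eq] at h1 h2
      rw [h1] at h2; norm_num at h2
    have hunion : μ ({ω | Z t ω = 1} ∪ {ω | Z t ω = -1}) = 1 := by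
      rw [measure_union hdisj hA', hZ1, hZneg]
      exact ENNReal.add_halves 1
    have hcompl : μ ({ω | Z t ω = 1} ∪ {ω | Z t ω = -1})ᶜ = 0 := by
      rw [prob_compl_eq_one_sub (hA.union hA'), hunion, tsub_self]
    rw [ae_iff]
    refine measure_mono_null ?_ hcompl
    intro ω hω
    simp only [Set.mem_setOf_eq, not_or] at hω
    simp only [Set.mem_compl_iff, Set.mem_union, Set.mem_setOf_eq, not_or]
    exact hω
  have hxb : ∀ (t : Fin B) ω, |x t ω| ≤ 1 := fun t ω =>
    abs_le.mpr ⟨by linarith [(hx01 t ω).1], (hx01 t ω).2⟩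
  have hWbd : ∀ n, ∀ᵐ ω ∂μ, |W n ω| ≤ (B:ℝ) := by
    intro n
    filter_upwards [hgood] with ω hω
    calc |W n ω| ≤ ∑ s ∈ filt n, |x s ω * Z s ω| := Finset.abs_sum_le_sum_abs _ _
      _ ≤ ∑ _s ∈ filt n, (1:ℝ) := by
          apply Finset.sum_le_sum
          intro s _
          have hz : |Z s ω| = 1 := by rcases hω s with h | h <;> simp [h]
          rw [abs_mul, hz, mul_one]
          exact hxb s ω
      _ = (filt n).card := by simp
      _ ≤ (B:ℝ) := by
          exact_mod_cast le_trans (Finset.card_le_univ _) (le_of_eq (Finset.card_fin B))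
  -- integrability helper
  have intg : ∀ (g : Ω → ℝ) (C : ℝ), Measurable g → (∀ᵐ ω ∂μ, |g ω| ≤ C) → Integrable g μ :=
    fun g C hg hC => (integrable_const C).mono' hg.aestronglyMeasurable
      (by simpa [Real.norm_eq_abs] using hC)
  -- expectation of Z is zero
  have hEZ : ∀ t : Fin B, ∫ ω, Z t ω ∂μ = 0 := by
    intro t
    have hA : MeasurableSet {ω | Z t ω = 1} := hZmeas t (measurableSet_singleton 1)
    have hA' : MeasurableSet {ω | Z t ω = -1} := hZmeas t (measurableSet_singleton (-1))
    have hZrep : Z t =ᵐ[μ] fun ω => Set.indicator {ω | Z t ω = 1} (fun _ => (1:ℝ)) ω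
        - Set.indicator {ω | Z t ω = -1} (fun _ => (1:ℝ)) ω := by
      filter_upwards [hgood] with ω hω
      rcases hω t with h | h
      · norm_num [Set.indicator_apply, Set.mem_setOf_eq, h]
      · norm_num [Set.indicator_apply, Set.mem_setOf_eq, h]
    rw [integral_congr_ae hZrep,
      integral_sub ((integrable_const (1:ℝ)).indicator hA) ((integrable_const (1:ℝ)).indicator hA'),
      integral_indicator_const _ hA, integral_indicator_const _ hA', measureReal_def, measureReal_def, hZ1, hZneg, sub_self]
  -- key orthogonality
  have hkey : ∀ (t : Fin B) (g : Ω → ℝ), Measurable[Mlt t] g →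
      ∫ ω, g ω * Z t ω ∂μ = 0 := by
    intro t g hg
    have hgm : Measurable g := hg.mono (hMle t) le_rfl
    have hI : Indep (Mlt t) (MeasurableSpace.comap (Z t) inferInstance) μ := by
      have h2 := indep_iSup_of_disjoint
        (m := fun i : Fin B => MeasurableSpace.comap (Z i) inferInstance)
        (fun i => (hZmeas i).comap_le) hZindep
        (S := {s : Fin B | s < t}) (T := {t})
        (by simp only [Set.disjoint_singleton_right, Set.mem_setOf_eq]; exact lt_irrefl t)
      rw [iSup_singleton] at h2
      exact h2
    have hIf : IndepFun g (Z t) μ := indep_of_indep_of_le_left hI hg.comap_le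
    rw [hIf.integral_fun_mul_eq_mul_integral hgm.aestronglyMeasurable (hZmeas t).aestronglyMeasurable,
      hEZ t, mul_zero]
  -- powers bound helper
  have hprod : ∀ (a b : ℝ) (m n : ℕ), |a| ≤ (B:ℝ) → |b| ≤ 1 → |a ^ m * b ^ n| ≤ (B:ℝ) ^ m := by
    intro a b m n h1 h2
    rw [abs_mul, abs_pow, abs_pow]
    calc |a| ^ m * |b| ^ n ≤ (B:ℝ) ^ m * 1 :=
          mul_le_mul (pow_le_pow_left₀ (abs_nonneg a) h1 m)
            (pow_le_one₀ (abs_nonneg b) h2) (by positivity) (by positivity)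
      _ = (B:ℝ) ^ m := mul_one _
  -- integrability of basic pieces
  have igS : ∀ n, Integrable (S n) μ := by
    intro n
    apply intg _ (B:ℝ) (Finset.measurable_sum _ fun s _ => (hxm s).pow_const 2)
    apply Filter.Eventually.of_forall
    intro ω
    have h1 : S n ω ≤ (B:ℝ) := by
      calc S n ω ≤ ∑ _s ∈ filt n, (1:ℝ) := Finset.sum_le_sum fun s _ => by
            have := hxb s ω
            nlinarith [abs_nonneg (x s ω), sq_abs (x s ω)]
        _ = (filt n).card := by simp
        _ ≤ (B:ℝ) := by
            exact_mod_cast le_trans (Finset.card_le_univ _) (le_of_eq (Finset.card_fin B))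
    have h0 : 0 ≤ S n ω := Finset.sum_nonneg fun s _ => sq_nonneg _
    rw [abs_of_nonneg h0]; exact h1
  have igW2 : ∀ n, Integrable (fun ω => (W n ω)^2) μ := by
    intro n
    apply intg _ ((B:ℝ)^2) ((hWm n).pow_const 2)
    filter_upwards [hWbd n] with ω h
    calc |(W n ω)^2| = |W n ω|^2 := by rw [abs_pow]
      _ ≤ (B:ℝ)^2 := pow_le_pow_left₀ (abs_nonneg _) h 2
  have igW4 : ∀ n, Integrable (fun ω => (W n ω)^4) μ := by
    intro n
    apply intg _ ((B:ℝ)^4) ((hWm n).pow_const 4)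
    filter_upwards [hWbd n] with ω h
    calc |(W n ω)^4| = |W n ω|^4 := by rw [abs_pow]
      _ ≤ (B:ℝ)^4 := pow_le_pow_left₀ (abs_nonneg _) h 4
  have igx2 : ∀ t : Fin B, Integrable (fun ω => (x t ω)^2) μ := by
    intro t
    apply intg _ 1 ((hxm t).pow_const 2)
    apply Filter.Eventually.of_forall
    intro ω
    rw [abs_pow]
    exact pow_le_one₀ (abs_nonneg _) (hxb t ω)
  have igx4 : ∀ t : Fin B, Integrable (fun ω => (x t ω)^4) μ := by
    intro t
    apply intg _ 1 ((hxm t).pow_const 4)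
    apply Filter.Eventually.of_forall
    intro ω
    rw [abs_pow]
    exact pow_le_one₀ (abs_nonneg _) (hxb t ω)
  -- second moment identity
  have hM2 : ∀ n, n ≤ B → ∫ ω, (W n ω)^2 ∂μ = ∫ ω, S n ω ∂μ := by
    intro n
    induction n with
    | zero =>
      intro _
      have e1 : ∀ ω, W 0 ω = 0 := fun ω => by simp [hWdef, hfilt0]
      have e2 : ∀ ω, S 0 ω = 0 := fun ω => by simp [hSdef, hfilt0]
      simp only [e1, e2]
      simp
    | succ k ih =>
      intro hk
      have hkB : k < B := hk
      set t : Fin B := ⟨k, hkB⟩ with ht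
      have hstep : ∀ ω, W (k+1) ω = W k ω + x t ω * Z t ω := by
        intro ω
        show ∑ s ∈ filt (k+1), x s ω * Z s ω = _
        have : filt (k+1) = insert t (filt k) := hfiltsucc t
        rw [this, Finset.sum_insert (htnot t)]
        ring
      have hae2 : (fun ω => (W (k+1) ω)^2)
          =ᵐ[μ] fun ω => (W k ω)^2 + (2 * (W k ω * x t ω)) * Z t ω + (x t ω)^2 := by
        filter_upwards [hgood] with ω hω
        rw [hstep ω]
        rcases hω t with h | h <;> rw [h] <;> ring
      have ig2 : Integrable (fun ω => (2 * (W k ω * x t ω)) * Z t ω) μ := by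
        apply intg _ (2 * (B:ℝ))
          (((measurable_const.mul ((hWm k).mul (hxm t)))).mul (hZmeas t))
        filter_upwards [hWbd k, hgood] with ω h1 h2
        have hz : |Z t ω| ≤ 1 := by rcases h2 t with h | h <;> simp [h]
        have hx := hxb t ω
        have h0w := abs_nonneg (W k ω)
        have h0x := abs_nonneg (x t ω)
        have h0z := abs_nonneg (Z t ω)
        simp only [Pi.mul_apply]
        rw [abs_mul, abs_mul, abs_mul, abs_two]
        nlinarith [mul_le_mul h1 hx h0x (by positivity : (0:ℝ) ≤ (B:ℝ))]
      have hmeas2 : Measurable[Mlt t] (fun ω => 2 * (W k ω * x t ω)) :=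
        measurable_const.mul ((hWmt t).mul (hxmeas' t))
      have hSstep : ∀ ω, S (k+1) ω = S k ω + (x t ω)^2 := by
        intro ω
        show ∑ s ∈ filt (k+1), (x s ω)^2 = _
        rw [hfiltsucc t, Finset.sum_insert (htnot t)]
        ring
      have hABi : Integrable (fun ω => (W k ω)^2 + (2 * (W k ω * x t ω)) * Z t ω) μ :=
        (igW2 k).add ig2
      calc ∫ ω, (W (k+1) ω)^2 ∂μ
          = ∫ ω, ((W k ω)^2 + (2 * (W k ω * x t ω)) * Z t ω + (x t ω)^2) ∂μ :=
            integral_congr_ae hae2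
        _ = (∫ ω, (W k ω)^2 ∂μ + ∫ ω, (2 * (W k ω * x t ω)) * Z t ω ∂μ)
            + ∫ ω, (x t ω)^2 ∂μ := by
            rw [integral_add hABi (igx2 t), integral_add (igW2 k) ig2]
        _ = ∫ ω, S k ω ∂μ + ∫ ω, (x t ω)^2 ∂μ := by
            rw [hkey t _ hmeas2, ih (Nat.le_of_succ_le hk)]; ring
        _ = ∫ ω, S (k+1) ω ∂μ := by
            simp only [hSstep]
            rw [integral_add (igS k) (igx2 t)]
  -- pointwise S monotonicity
  have hSle : ∀ n ω, S n ω ≤ S B ω := by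
    intro n ω
    apply Finset.sum_le_sum_of_subset_of_nonneg
    · rw [hfiltB]; exact Finset.subset_univ _
    · intro s _ _; exact sq_nonneg _
  have hx2leS : ∀ (t : Fin B) ω, (x t ω)^2 ≤ S B ω := by
    intro t ω
    have : t ∈ filt B := by rw [hfiltB]; exact Finset.mem_univ t
    exact Finset.single_le_sum (fun s _ => sq_nonneg (x s ω)) this
  -- fourth moment bound
  have hM4 : ∀ n, n ≤ B → ∫ ω, (W n ω)^4 ∂μ ≤ 7 * n * ∫ ω, S B ω ∂μ := by
    intro n
    induction n with
    | zero =>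
      intro _
      have e1 : ∀ ω, W 0 ω = 0 := fun ω => by simp [hWdef, hfilt0]
      simp only [e1]
      simp
    | succ k ih =>
      intro hk
      have hkB : k < B := hk
      set t : Fin B := ⟨k, hkB⟩ with ht
      have hstep : ∀ ω, W (k+1) ω = W k ω + x t ω * Z t ω := by
        intro ω
        show ∑ s ∈ filt (k+1), x s ω * Z s ω = _
        rw [hfiltsucc t, Finset.sum_insert (htnot t)]
        ring
      have hae4 : (fun ω => (W (k+1) ω)^4)
          =ᵐ[μ] fun ω => (W k ω)^4
            + (4 * ((W k ω)^3 * x t ω) + 4 * (W k ω * (x t ω)^3)) * Z t ω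
            + 6 * ((W k ω)^2 * (x t ω)^2) + (x t ω)^4 := by
        filter_upwards [hgood] with ω hω
        rw [hstep ω]
        rcases hω t with h | h <;> rw [h] <;> ring
      have igodd : Integrable
          (fun ω => (4 * ((W k ω)^3 * x t ω) + 4 * (W k ω * (x t ω)^3)) * Z t ω) μ := by
        apply intg _ (8 * (B:ℝ)^3)
        · exact ((measurable_const.mul (((hWm k).pow_const 3).mul (hxm t))).add
            (measurable_const.mul ((hWm k).mul ((hxm t).pow_const 3)))).mul (hZmeas t)
        filter_upwards [hWbd k, hgood] with ω h1 h2
        have hz : |Z t ω| ≤ 1 := by rcases h2 t with h | h <;> simp [h]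
        have hBB : (B:ℝ) ≤ (B:ℝ)^3 := le_self_pow₀ hBc1 (by norm_num)
        calc |(4 * ((W k ω)^3 * x t ω) + 4 * (W k ω * (x t ω)^3)) * Z t ω|
            ≤ |4 * ((W k ω)^3 * x t ω) + 4 * (W k ω * (x t ω)^3)| := by
              rw [abs_mul]
              exact mul_le_of_le_one_right (abs_nonneg _) hz
          _ ≤ |4 * ((W k ω)^3 * x t ω)| + |4 * (W k ω * (x t ω)^3)| := abs_add_le _ _
          _ ≤ 8 * (B:ℝ)^3 := by
              have e1' : |(W k ω)^3 * x t ω| ≤ (B:ℝ)^3 := by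
                simpa using hprod (W k ω) (x t ω) 3 1 h1 (hxb t ω)
              have e2' : |W k ω * (x t ω)^3| ≤ (B:ℝ) := by
                simpa using hprod (W k ω) (x t ω) 1 3 h1 (hxb t ω)
              rw [abs_mul (4:ℝ) ((W k ω)^3 * x t ω), abs_mul (4:ℝ) (W k ω * (x t ω)^3),
                show |(4:ℝ)| = 4 by norm_num]
              linarith
      have igmid : Integrable (fun ω => 6 * ((W k ω)^2 * (x t ω)^2)) μ := by
        apply intg _ (6 * (B:ℝ)^2)
          (measurable_const.mul (((hWm k).pow_const 2).mul ((hxm t).pow_const 2)))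
        filter_upwards [hWbd k] with ω h1
        have e1 : |(W k ω)^2 * (x t ω)^2| ≤ (B:ℝ)^2 := hprod _ _ 2 2 h1 (hxb t ω)
        simp only [Pi.mul_apply]
        rw [abs_mul]
        calc |(6:ℝ)| * |(W k ω)^2 * (x t ω)^2| = 6 * |(W k ω)^2 * (x t ω)^2| := by norm_num
          _ ≤ 6 * (B:ℝ)^2 := by linarith
      have igWx22 : Integrable (fun ω => (W k ω)^2 * (x t ω)^2) μ := by
        apply intg _ ((B:ℝ)^2)
          (((hWm k).pow_const 2).mul ((hxm t).pow_const 2))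
        filter_upwards [hWbd k] with ω h1
        exact hprod _ _ 2 2 h1 (hxb t ω)
      have hmeasodd : Measurable[Mlt t]
          (fun ω => 4 * ((W k ω)^3 * x t ω) + 4 * (W k ω * (x t ω)^3)) :=
        (measurable_const.mul (((hWmt t).pow_const 3).mul (hxmeas' t))).add
          (measurable_const.mul ((hWmt t).mul ((hxmeas' t).pow_const 3)))
      have hSB0 : 0 ≤ ∫ ω, S B ω ∂μ :=
        integral_nonneg fun ω => Finset.sum_nonneg fun s _ => sq_nonneg _
      -- main computation
      have e1 : Integrable (fun ω => (W k ω)^4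
          + (4 * ((W k ω)^3 * x t ω) + 4 * (W k ω * (x t ω)^3)) * Z t ω) μ :=
        (igW4 k).add igodd
      have e2 : Integrable (fun ω => (W k ω)^4
          + (4 * ((W k ω)^3 * x t ω) + 4 * (W k ω * (x t ω)^3)) * Z t ω
          + 6 * ((W k ω)^2 * (x t ω)^2)) μ := e1.add igmid
      have hsplit : ∫ ω, (W (k+1) ω)^4 ∂μ
          = ∫ ω, (W k ω)^4 ∂μ
            + ∫ ω, (4 * ((W k ω)^3 * x t ω) + 4 * (W k ω * (x t ω)^3)) * Z t ω ∂μ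
            + ∫ ω, 6 * ((W k ω)^2 * (x t ω)^2) ∂μ + ∫ ω, (x t ω)^4 ∂μ := by
        rw [integral_congr_ae hae4, integral_add e2 (igx4 t), integral_add e1 igmid,
          integral_add (igW4 k) igodd]
      rw [hsplit, hkey t _ hmeasodd]
      have hb1 : ∫ ω, (W k ω)^4 ∂μ ≤ 7 * k * ∫ ω, S B ω ∂μ := ih (Nat.le_of_succ_le hk)
      have hb2 : ∫ ω, 6 * ((W k ω)^2 * (x t ω)^2) ∂μ ≤ 6 * ∫ ω, S B ω ∂μ := by
        rw [integral_const_mul]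
        have h1 : ∫ ω, (W k ω)^2 * (x t ω)^2 ∂μ ≤ ∫ ω, (W k ω)^2 ∂μ := by
          apply integral_mono igWx22 (igW2 k)
          intro ω
          have hx2 : (x t ω)^2 ≤ 1 := by
            have := hxb t ω
            nlinarith [abs_nonneg (x t ω), sq_abs (x t ω)]
          show (W k ω)^2 * (x t ω)^2 ≤ (W k ω)^2
          exact mul_le_of_le_one_right (sq_nonneg (W k ω)) hx2
        have h2 : ∫ ω, (W k ω)^2 ∂μ = ∫ ω, S k ω ∂μ := hM2 k (Nat.le_of_succ_le hk)
        have h3 : ∫ ω, S k ω ∂μ ≤ ∫ ω, S B ω ∂μ :=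
          integral_mono (igS k) (igS B) fun ω => hSle k ω
        linarith
      have hb3 : ∫ ω, (x t ω)^4 ∂μ ≤ ∫ ω, S B ω ∂μ := by
        apply integral_mono (igx4 t) (igS B)
        intro ω
        have h1 := (hx01 t ω).1
        have h2 := (hx01 t ω).2
        have hx2le1 : (x t ω)^2 ≤ 1 := by nlinarith
        have hx4 : (x t ω)^4 ≤ (x t ω)^2 := by
          calc (x t ω)^4 = (x t ω)^2 * (x t ω)^2 := by ring
            _ ≤ (x t ω)^2 * 1 := mul_le_mul_of_nonneg_left hx2le1 (sq_nonneg _)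
            _ = (x t ω)^2 := mul_one _
        exact le_trans hx4 (hx2leS t ω)
      push_cast
      linarith
  -- final assembly
  have hXsum : ∀ ω, W B ω = ∑ t, x t ω * Z t ω := by
    intro ω
    show ∑ s ∈ filt B, x s ω * Z s ω = _
    rw [hfiltB]
  have hSBsum : ∀ ω, S B ω = ∑ t, (x t ω)^2 := by
    intro ω
    show ∑ s ∈ filt B, (x s ω)^2 = _
    rw [hfiltB]
  set X : Ω → ℝ := W B with hXdef
  have hXmb : Measurable X := hWm B
  have hXbd : ∀ᵐ ω ∂μ, |X ω| ≤ (B:ℝ) := hWbd B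
  have hmom : ε * B ≤ ∫ ω, S B ω ∂μ := by
    calc ε * B ≤ ∫ ω, ∑ t, (x t ω)^2 ∂μ := hmoment
      _ = ∫ ω, S B ω ∂μ := integral_congr_ae (Filter.Eventually.of_forall fun ω =>
          (hSBsum ω).symm)
  set m2 : ℝ := ∫ ω, (X ω)^2 ∂μ with hm2def
  set m4 : ℝ := ∫ ω, (X ω)^4 ∂μ with hm4def
  set m3 : ℝ := ∫ ω, |X ω|^3 ∂μ with hm3def
  set a : ℝ := ∫ ω, |X ω| ∂μ with hadef
  have hm2S : m2 = ∫ ω, S B ω ∂μ := hM2 B le_rfl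
  have hm2pos : 0 < m2 := by
    rw [hm2S]
    calc (0:ℝ) < ε * B := by positivity
      _ ≤ ∫ ω, S B ω ∂μ := hmom
  have hm4b : m4 ≤ 7 * B * m2 := by
    rw [hm2S]
    exact hM4 B le_rfl
  have ha0 : 0 ≤ a := integral_nonneg fun ω => abs_nonneg _
  have hm30 : 0 ≤ m3 := integral_nonneg fun ω => by positivity
  have hm40 : 0 ≤ m4 := integral_nonneg fun ω => by positivity
  -- integrability for CS
  have igabs : Integrable (fun ω => |X ω|) μ := by
    apply intg _ (B:ℝ) hXmb.abs
    filter_upwards [hXbd] with ω h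
    rwa [abs_abs]
  have igabs3 : Integrable (fun ω => |X ω|^3) μ := by
    apply intg _ ((B:ℝ)^3) (hXmb.abs.pow_const 3)
    filter_upwards [hXbd] with ω h
    rw [abs_pow, abs_abs]
    exact pow_le_pow_left₀ (abs_nonneg _) h 3
  -- CS2 : m3^2 ≤ m2 * m4
  have hCS2 : m3^2 ≤ m2 * m4 := by
    have h := cs_aux μ (fun ω => |X ω|) (fun ω => (X ω)^2) ?_ ?_ ?_
    · have E1 : ∫ ω, |X ω| * (X ω)^2 ∂μ = m3 :=
        integral_congr_ae (Filter.Eventually.of_forall fun ω => by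
          show |X ω| * (X ω)^2 = |X ω|^3
          rw [← sq_abs]; ring)
      have E2 : ∫ ω, |X ω|^2 ∂μ = m2 :=
        integral_congr_ae (Filter.Eventually.of_forall fun ω => by
          show |X ω|^2 = (X ω)^2
          exact sq_abs _)
      have E3 : ∫ ω, ((X ω)^2)^2 ∂μ = m4 :=
        integral_congr_ae (Filter.Eventually.of_forall fun ω => by
          show ((X ω)^2)^2 = (X ω)^4
          ring)
      rw [E1, E2, E3] at h
      exact h
    · apply intg _ ((B:ℝ)^2) (hXmb.abs.pow_const 2)
      filter_upwards [hXbd] with ω h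
      rw [abs_pow, abs_abs]
      exact pow_le_pow_left₀ (abs_nonneg _) h 2
    · apply intg _ ((B:ℝ)^4) ((hXmb.pow_const 2).pow_const 2)
      filter_upwards [hXbd] with ω h
      rw [abs_pow, abs_pow]
      have h4 := pow_le_pow_left₀ (abs_nonneg (X ω)) h 4
      calc (|X ω|^2)^2 = |X ω|^4 := by ring
        _ ≤ (B:ℝ)^4 := h4
    · apply intg _ ((B:ℝ)^3) (hXmb.abs.mul (hXmb.pow_const 2))
      filter_upwards [hXbd] with ω h
      simp only [Pi.mul_apply]
      rw [abs_mul, abs_abs, abs_pow]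
      calc |X ω| * |X ω|^2 = |X ω|^3 := by ring
        _ ≤ (B:ℝ)^3 := pow_le_pow_left₀ (abs_nonneg _) h 3
  -- CS1 : m2^2 ≤ a * m3
  have hCS1 : m2^2 ≤ a * m3 := by
    have h := cs_aux μ (fun ω => Real.sqrt |X ω|) (fun ω => |X ω| * Real.sqrt |X ω|) ?_ ?_ ?_
    · have E1 : ∫ ω, Real.sqrt |X ω| * (|X ω| * Real.sqrt |X ω|) ∂μ = m2 := by
        apply integral_congr_ae (Filter.Eventually.of_forall fun ω => ?_)
        have hs := Real.mul_self_sqrt (abs_nonneg (X ω))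
        calc Real.sqrt |X ω| * (|X ω| * Real.sqrt |X ω|)
            = |X ω| * (Real.sqrt |X ω| * Real.sqrt |X ω|) := by ring
          _ = |X ω| * |X ω| := by rw [hs]
          _ = (X ω)^2 := by rw [← sq_abs]; ring
      have E2 : ∫ ω, (Real.sqrt |X ω|)^2 ∂μ = a :=
        integral_congr_ae (Filter.Eventually.of_forall fun ω =>
          Real.sq_sqrt (abs_nonneg _))
      have E3 : ∫ ω, (|X ω| * Real.sqrt |X ω|)^2 ∂μ = m3 := by
        apply integral_congr_ae (Filter.Eventually.of_forall fun ω => ?_)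
        rw [mul_pow, Real.sq_sqrt (abs_nonneg _)]
        ring
      rw [E1, E2, E3] at h
      exact h
    · apply intg _ (B:ℝ) (hXmb.abs.sqrt.pow_const 2)
      filter_upwards [hXbd] with ω h
      rw [Real.sq_sqrt (abs_nonneg _), abs_abs]
      exact h
    · apply intg _ ((B:ℝ)^3) ((hXmb.abs.mul hXmb.abs.sqrt).pow_const 2)
      filter_upwards [hXbd] with ω h
      simp only [Pi.mul_apply, Pi.pow_apply]
      rw [mul_pow, Real.sq_sqrt (abs_nonneg _), abs_mul, abs_pow, abs_abs]
      calc |X ω|^2 * |X ω| = |X ω|^3 := by ring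
        _ ≤ (B:ℝ)^3 := pow_le_pow_left₀ (abs_nonneg _) h 3
    · apply intg _ ((B:ℝ)^2) (hXmb.abs.sqrt.mul (hXmb.abs.mul hXmb.abs.sqrt))
      filter_upwards [hXbd] with ω h
      have hs := Real.mul_self_sqrt (abs_nonneg (X ω))
      have : Real.sqrt |X ω| * (|X ω| * Real.sqrt |X ω|) = |X ω| * |X ω| := by
        calc Real.sqrt |X ω| * (|X ω| * Real.sqrt |X ω|)
            = |X ω| * (Real.sqrt |X ω| * Real.sqrt |X ω|) := by ring
          _ = |X ω| * |X ω| := by rw [hs]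
      simp only [Pi.mul_apply]
      rw [this, abs_mul, abs_abs]
      calc |X ω| * |X ω| = |X ω|^2 := by ring
        _ ≤ (B:ℝ)^2 := pow_le_pow_left₀ (abs_nonneg _) h 2
  -- conclude m2^2 ≤ 7 B a^2
  have hmain : m2^2 ≤ 7 * B * a^2 := by
    have e1 : (m2^2)^2 ≤ (a * m3)^2 := pow_le_pow_left₀ (sq_nonneg m2) hCS1 2
    have e2 : (a * m3)^2 = a^2 * m3^2 := by ring
    have e3 : a^2 * m3^2 ≤ a^2 * (m2 * m4) := mul_le_mul_of_nonneg_left hCS2 (sq_nonneg a)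
    have e4 : a^2 * (m2 * m4) ≤ a^2 * (m2 * (7 * B * m2)) :=
      mul_le_mul_of_nonneg_left (mul_le_mul_of_nonneg_left hm4b (le_of_lt hm2pos)) (sq_nonneg a)
    have e5 : (m2^2)^2 ≤ (7 * B * a^2) * m2^2 := by nlinarith
    have := le_of_mul_le_mul_right (by nlinarith : m2^2 * m2^2 ≤ (7 * B * a^2) * m2^2)
      (by positivity : (0:ℝ) < m2^2)
    linarith
  -- a ≥ m2 / sqrt (7B)
  have hsqrt7B : (0:ℝ) < Real.sqrt (7 * B) := Real.sqrt_pos.mpr (by positivity)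
  have ham2 : m2 ≤ Real.sqrt (7 * B) * a := by
    have h1 : Real.sqrt (m2^2) ≤ Real.sqrt (7 * B * a^2) := Real.sqrt_le_sqrt hmain
    rw [Real.sqrt_sq (le_of_lt hm2pos)] at h1
    have h2 : Real.sqrt (7 * B * a^2) = Real.sqrt (7 * B) * a := by
      rw [Real.sqrt_mul (by positivity) (a^2), Real.sqrt_sq ha0]
    rwa [h2] at h1
  -- numerics
  have hL : (1:ℝ) ≤ Real.log (1/ε) := by
    have h4 : (4:ℝ) ≤ 1/ε := by
      rw [le_div_iff₀ hε0]
      linarith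
    have hlog4 : (1:ℝ) ≤ Real.log 4 := by
      rw [Real.le_log_iff_exp_le (by norm_num : (0:ℝ) < 4)]
      exact le_trans Real.exp_one_lt_d9.le (by norm_num)
    calc (1:ℝ) ≤ Real.log 4 := hlog4
      _ ≤ Real.log (1/ε) := Real.log_le_log (by norm_num) h4
  have hsqrtL : Real.sqrt 7 ≤ 4 * Real.sqrt (Real.log (1/ε)) := by
    have h16 : Real.sqrt (16 * Real.log (1/ε)) = 4 * Real.sqrt (Real.log (1/ε)) := by
      rw [Real.sqrt_mul (by norm_num) _, show Real.sqrt 16 = 4 by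
        rw [show (16:ℝ) = 4^2 by norm_num, Real.sqrt_sq (by norm_num)]]
    rw [← h16]
    apply Real.sqrt_le_sqrt
    linarith
  have hsqrtLpos : (0:ℝ) < 4 * Real.sqrt (Real.log (1/ε)) := by
    have : (0:ℝ) < Real.sqrt (Real.log (1/ε)) := Real.sqrt_pos.mpr (by linarith)
    linarith
  have hsqrt7pos : (0:ℝ) < Real.sqrt 7 := Real.sqrt_pos.mpr (by norm_num)
  -- a ≥ ε √B / √7
  have hstep1 : ε * Real.sqrt B / Real.sqrt 7 ≤ a := by
    rw [div_le_iff₀ hsqrt7pos]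
    have hsB : (0:ℝ) < Real.sqrt B := Real.sqrt_pos.mpr hB0
    have hBs : ((B:ℝ)) = Real.sqrt B * Real.sqrt B := (Real.mul_self_sqrt (le_of_lt hB0)).symm
    have h7B : Real.sqrt (7 * B) = Real.sqrt 7 * Real.sqrt B := Real.sqrt_mul (by norm_num) _
    have key : ε * (B:ℝ) ≤ Real.sqrt 7 * Real.sqrt B * a := by
      calc ε * (B:ℝ) ≤ m2 := hmom.trans_eq hm2S.symm
        _ ≤ Real.sqrt (7 * B) * a := ham2
        _ = Real.sqrt 7 * Real.sqrt B * a := by rw [h7B]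
    have : ε * (Real.sqrt B * Real.sqrt B) ≤ (Real.sqrt 7 * a) * Real.sqrt B := by
      calc ε * (Real.sqrt B * Real.sqrt B) = ε * (B:ℝ) := by rw [← hBs]
        _ ≤ Real.sqrt 7 * Real.sqrt B * a := key
        _ = (Real.sqrt 7 * a) * Real.sqrt B := by ring
    have := le_of_mul_le_mul_right (by linarith [this] :
      (ε * Real.sqrt B) * Real.sqrt B ≤ (a * Real.sqrt 7) * Real.sqrt B) hsB
    linarith
  -- finish
  have hgoal : ε * Real.sqrt B / (4 * Real.sqrt (Real.log (1/ε)))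
      ≤ ε * Real.sqrt B / Real.sqrt 7 := by
    apply div_le_div_of_nonneg_left (by positivity) hsqrt7pos hsqrtL
  have hEgoal : ∫ ω, |∑ t, x t ω * Z t ω| ∂μ = a := by
    apply integral_congr_ae (Filter.Eventually.of_forall fun ω => ?_)
    rw [← hXsum ω]
  rw [hEgoal]
  linarith

end Main

/-- Martingale anti-concentration: if `Z t` are i.i.d. uniform on `{-1,1}`,
`x t ∈ [0,1]` is measurable with respect to the σ-algebra generated by `Z s` for `s < t`
(so `Z t` is independent of `x 1, …, x t`), and `E[∑ x t ^ 2] ≥ ε B` for `ε ∈ (0, 1/4]`,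
then `E|∑ x t * Z t| ≥ ε √B / (4 √(log (1/ε)))`. -/
theorem stmt0
    {Ω : Type*} [MeasurableSpace Ω] (μ : Measure Ω) [IsProbabilityMeasure μ]
    (B : ℕ) (hB : 1 ≤ B) (x Z : Fin B → Ω → ℝ)
    (hx01 : ∀ t ω, x t ω ∈ Set.Icc (0:ℝ) 1)
    (hxmeas : ∀ t : Fin B, Measurable[⨆ s : Fin B, ⨆ _ : s < t,
      MeasurableSpace.comap (Z s) inferInstance] (x t))
    (hZmeas : ∀ t, Measurable (Z t))
    (hZindep : iIndepFun Z μ)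
    (hZ1 : ∀ t, μ {ω | Z t ω = 1} = 1/2)
    (hZneg : ∀ t, μ {ω | Z t ω = -1} = 1/2)
    (ε : ℝ) (hε : ε ∈ Set.Ioc (0:ℝ) (1/4))
    (hmoment : ε * B ≤ ∫ ω, ∑ t, (x t ω)^2 ∂μ) :
    ε * Real.sqrt B / (4 * Real.sqrt (Real.log (1/ε)))
      ≤ ∫ ω, |∑ t, x t ω * Z t ω| ∂μ := by
  exact stmt0' μ B hB x Z hx01 hxmeas hZmeas hZindep hZ1 hZneg ε hε hmoment
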